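/- Let X, Y be normed linear spaces and T a nonzero bounded linear operator from X to Y. Then for any bounded operator A, T ⊥_B A if and only if either (a) there exists a sequence (x_n) of unit vectors with ‖Tx_n‖ → ‖T‖ and ‖Ax_n‖ → 0, or (b) there exist sequences (x_n), (y_n) of unit vectors and positive reals ε_n → 0, δ_n → 0 such that ‖Tx_n‖ → ‖T‖, ‖Ty_n‖ → ‖T‖, and Ax_n ∈ (Tx_n)^{+(ε_n)} and Ay_n ∈ (Ty_n)^{−(δ_n)} for all n. -/

import Mathlib

open Filter Topology

section Aux
variable {X Y : Type*} [NormedAddCommGroup X] [NormedSpace ℝ X]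
  [NormedAddCommGroup Y] [NormedSpace ℝ Y]

lemma stmt6_exists_unit (S : X →L[ℝ] Y) {η : ℝ} (hη : 0 < η) (hηS : η ≤ ‖S‖) :
    ∃ x : X, ‖x‖ = 1 ∧ ‖S‖ - η < ‖S x‖ := by
  by_contra h
  push_neg at h
  have hb : ‖S‖ ≤ ‖S‖ - η := by
    refine S.opNorm_le_bound (by linarith) (fun x => ?_)
    rcases eq_or_ne x 0 with rfl | hx
    · simp
    · have hxn : ‖x‖ ≠ 0 := norm_ne_zero_iff.mpr hx
      have h1 : ‖(‖x‖⁻¹ • x)‖ = 1 := by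
        rw [norm_smul, norm_inv, norm_norm, inv_mul_cancel₀ hxn]
      have h2 := h _ h1
      rw [map_smul, norm_smul, norm_inv, norm_norm] at h2
      calc ‖S x‖ = ‖x‖ * (‖x‖⁻¹ * ‖S x‖) := by field_simp
      _ ≤ ‖x‖ * (‖S‖ - η) := mul_le_mul_of_nonneg_left h2 (norm_nonneg x)
      _ = (‖S‖ - η) * ‖x‖ := mul_comm _ _
  linarith

lemma stmt6_convex_step (u v : Y) {a b : ℝ} (ha : 0 < a) (hab : a ≤ b) :
    b * (‖u + a • v‖ - ‖u‖) ≤ a * (‖u + b • v‖ - ‖u‖) := by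
  have hb : 0 < b := ha.trans_le hab
  have key : u + a • v = (a/b) • (u + b • v) + (1 - a/b) • u := by
    match_scalars <;> field_simp <;> ring
  have hab1 : a / b ≤ 1 := by rw [div_le_one hb]; exact hab
  have hn : ‖u + a • v‖ ≤ (a/b) * ‖u + b • v‖ + (1 - a/b) * ‖u‖ := by
    rw [key]
    refine (norm_add_le _ _).trans ?_
    rw [norm_smul, norm_smul, Real.norm_eq_abs, Real.norm_eq_abs,
      abs_of_nonneg (by positivity), abs_of_nonneg (by linarith)]
  have h2 := mul_le_mul_of_nonneg_left hn hb.le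
  have h3 : b * ((a/b) * ‖u + b • v‖ + (1 - a/b) * ‖u‖)
      = a * ‖u + b • v‖ + (b - a) * ‖u‖ := by field_simp
  nlinarith [h2, h3]


lemma stmt6_mid (u v : Y) {a l eta Lam Cn : ℝ} (ha : 0 < a) (hal : a ≤ l) (hlL : l ≤ Lam)
    (heta0 : 0 ≤ eta) (heta2 : eta ≤ a^2) (hga : ‖u‖ - eta ≤ ‖u + a • v‖)
    (hC : Lam * a ≤ Cn) :
    ‖u‖ - Cn ≤ ‖u + l • v‖ := by
  have hcs := stmt6_convex_step u v ha hal
  have hL0 : 0 ≤ Lam := le_trans ha.le (hal.trans hlL)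
  have h1 : l * eta ≤ Lam * eta := mul_le_mul_of_nonneg_right hlL heta0
  have h2 : Lam * eta ≤ Lam * a^2 := mul_le_mul_of_nonneg_left heta2 hL0
  have h3 : Lam * a * a ≤ Cn * a := mul_le_mul_of_nonneg_right hC ha.le
  have h4 : l * (-eta) ≤ l * (‖u + a • v‖ - ‖u‖) :=
    mul_le_mul_of_nonneg_left (by linarith) (le_trans ha.le hal)
  have e1 : Lam * a^2 = Lam * a * a := by ring
  have h5 : a * (-Cn) ≤ a * (‖u + l • v‖ - ‖u‖) := by nlinarith [hcs, h4, h1, h2, h3, e1]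
  have h6 := (mul_le_mul_iff_right₀ ha).mp h5
  linarith

set_option maxHeartbeats 1000000 in
lemma stmt6_plus_side (T A : X →L[ℝ] Y) (hT : T ≠ 0)
    (horth : ∀ l : ℝ, ‖T‖ ≤ ‖T + l • A‖)
    (hnota : ¬ (∃ x : ℕ → X, (∀ n, ‖x n‖ = 1) ∧
          Tendsto (fun n => ‖T (x n)‖) atTop (nhds ‖T‖) ∧
          Tendsto (fun n => ‖A (x n)‖) atTop (nhds 0))) :
    ∃ (x : ℕ → X) (ε : ℕ → ℝ),
      (∀ n, ‖x n‖ = 1) ∧ (∀ n, 0 < ε n) ∧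
      Tendsto ε atTop (nhds 0) ∧
      Tendsto (fun n => ‖T (x n)‖) atTop (nhds ‖T‖) ∧
      (∀ n, ∀ l : ℝ, 0 ≤ l →
        Real.sqrt (1 - (ε n) ^ 2) * ‖T (x n)‖ ≤ ‖T (x n) + l • A (x n)‖) := by
  have hT0 : (0:ℝ) < ‖T‖ := norm_pos_iff.mpr hT
  have l1 : Tendsto (fun n : ℕ => 1 / ((n:ℝ) + 1)) atTop (nhds 0) :=
    tendsto_one_div_add_atTop_nhds_zero_nat
  -- extract uniform lower bound on ‖A z‖ for norming z
  have hext : ∃ ε₀ > (0:ℝ), ∃ d > (0:ℝ), ∀ z : X, ‖z‖ = 1 → ‖T‖ - d < ‖T z‖ → ε₀ ≤ ‖A z‖ := by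
    by_contra hc
    push_neg at hc
    have key : ∀ n : ℕ, ∃ z : X, ‖z‖ = 1 ∧ ‖T‖ - 1/((n:ℝ)+1) < ‖T z‖ ∧ ‖A z‖ < 1/((n:ℝ)+1) := by
      intro n
      have hp : (0:ℝ) < 1/((n:ℝ)+1) := by positivity
      exact hc _ hp _ hp
    choose z hz1 hz2 hz3 using key
    refine hnota ⟨z, hz1, ?_, ?_⟩
    · refine tendsto_of_tendsto_of_tendsto_of_le_of_le
        (g := fun n : ℕ => ‖T‖ - 1/((n:ℝ)+1)) (h := fun _ => ‖T‖) ?_ tendsto_const_nhds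
        (fun n => (hz2 n).le) (fun n => by simpa [hz1 n] using T.le_opNorm (z n))
      simpa using (tendsto_const_nhds (x := ‖T‖) (f := atTop)).sub l1
    · exact squeeze_zero (fun n => norm_nonneg _) (fun n => (hz3 n).le) l1
  obtain ⟨ε₀, hε₀, d, hd, hlow⟩ := hext
  set Λ : ℝ := 2 * ‖T‖ / ε₀ with hΛdef
  have hΛ0 : 0 < Λ := by positivity
  -- choose near-norming vectors for T + (1/(n+1)) A
  have hsel : ∀ n : ℕ, ∃ z : X, ‖z‖ = 1 ∧
      ‖T‖ - min (1/((n:ℝ)+1)^2) (‖T‖/2) < ‖T z + (1/((n:ℝ)+1)) • A z‖ := by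
    intro n
    set η := min (1/((n:ℝ)+1)^2) (‖T‖/2) with hηdef
    have hη : 0 < η := lt_min (by positivity) (by positivity)
    have hTS := horth (1/((n:ℝ)+1))
    have hS : η ≤ ‖T + (1/((n:ℝ)+1)) • A‖ :=
      le_trans (le_trans (min_le_right _ _) (by linarith)) hTS
    obtain ⟨z, hz, hz2⟩ := stmt6_exists_unit _ hη hS
    refine ⟨z, hz, ?_⟩
    have : ‖T‖ - η ≤ ‖T + (1/((n:ℝ)+1)) • A‖ - η := by linarith
    calc ‖T‖ - η ≤ ‖T + (1/((n:ℝ)+1)) • A‖ - η := this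
    _ < ‖(T + (1/((n:ℝ)+1)) • A) z‖ := hz2
    _ = ‖T z + (1/((n:ℝ)+1)) • A z‖ := by
        simp [ContinuousLinearMap.add_apply, ContinuousLinearMap.smul_apply]
  choose x hx1 hg0 using hsel
  have hAx : ∀ n, ‖A (x n)‖ ≤ ‖A‖ := fun n => by simpa [hx1 n] using A.le_opNorm (x n)
  have hTxle : ∀ n, ‖T (x n)‖ ≤ ‖T‖ := fun n => by simpa [hx1 n] using T.le_opNorm (x n)
  have hmin_le : ∀ n : ℕ, min (1/((n:ℝ)+1)^2) (‖T‖/2) ≤ 1/((n:ℝ)+1)^2 := fun n => min_le_left _ _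
  have hsq_le : ∀ n : ℕ, (1:ℝ)/((n:ℝ)+1)^2 ≤ 1/((n:ℝ)+1) := by
    intro n
    have h1 : (0:ℝ) < (n:ℝ)+1 := by positivity
    rw [div_le_div_iff₀ (by positivity) h1]
    nlinarith
  have hTxlb : ∀ n : ℕ, ‖T‖ - 1/((n:ℝ)+1) - ‖A‖ * (1/((n:ℝ)+1)) ≤ ‖T (x n)‖ := by
    intro n
    have h1 := hg0 n
    have h2 : ‖T (x n) + (1/((n:ℝ)+1)) • A (x n)‖ ≤ ‖T (x n)‖ + (1/((n:ℝ)+1)) * ‖A (x n)‖ := by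
      refine (norm_add_le _ _).trans ?_
      rw [norm_smul, Real.norm_eq_abs, abs_of_nonneg (by positivity)]
    have h3 := (hmin_le n).trans (hsq_le n)
    have h4 : (1/((n:ℝ)+1)) * ‖A (x n)‖ ≤ (1/((n:ℝ)+1)) * ‖A‖ :=
      mul_le_mul_of_nonneg_left (hAx n) (by positivity)
    nlinarith
  have hTxt : Tendsto (fun n => ‖T (x n)‖) atTop (nhds ‖T‖) := by
    refine tendsto_of_tendsto_of_tendsto_of_le_of_le
      (g := fun n : ℕ => ‖T‖ - 1/((n:ℝ)+1) - ‖A‖ * (1/((n:ℝ)+1))) (h := fun _ => ‖T‖)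
      ?_ tendsto_const_nhds hTxlb hTxle
    have := ((tendsto_const_nhds (x := ‖T‖) (f := atTop)).sub l1).sub (l1.const_mul ‖A‖)
    simpa using this
  set C : ℕ → ℝ := fun n => max ‖A‖ Λ * (1/((n:ℝ)+1)) with hCdef
  set C' : ℕ → ℝ := fun n => (max ‖A‖ Λ + 1) * (1/((n:ℝ)+1)) with hC'def
  have hmaxpos : 0 < max ‖A‖ Λ := lt_max_of_lt_right hΛ0
  have hC0 : ∀ n, 0 ≤ C n := fun n => by positivity
  have hC'0 : ∀ n, 0 < C' n := fun n => by positivity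
  have hCC' : ∀ n, C n < C' n := by
    intro n
    have h1 : (0:ℝ) < 1/((n:ℝ)+1) := by positivity
    simp only [hCdef, hC'def]
    nlinarith [h1, hmaxpos]
  have hC't : Tendsto C' atTop (nhds 0) := by
    have h := l1.const_mul (max ‖A‖ Λ + 1)
    rw [mul_zero] at h
    exact h
  -- main pointwise estimate
  have main : ∀ n : ℕ, ‖T‖ - d < ‖T (x n)‖ → ∀ l : ℝ, 0 ≤ l →
      ‖T (x n)‖ - C n ≤ ‖T (x n) + l • A (x n)‖ := by
    intro n hn l hl
    set u := T (x n) with hu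
    set v := A (x n) with hv
    have ha : (0:ℝ) < 1/((n:ℝ)+1) := by positivity
    rcases le_or_gt l (1/((n:ℝ)+1)) with hcase1 | hcase1
    · -- small l
      have h1 : ‖u‖ - ‖l • v‖ ≤ ‖u + l • v‖ := by
        have := norm_sub_norm_le u (-(l • v)); simpa using this
      have h2 : ‖l • v‖ = l * ‖v‖ := by rw [norm_smul, Real.norm_eq_abs, abs_of_nonneg hl]
      have h3 : l * ‖v‖ ≤ (1/((n:ℝ)+1)) * ‖A‖ :=
        mul_le_mul hcase1 (hAx n) (norm_nonneg _) ha.le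
      have h4 : (1/((n:ℝ)+1)) * ‖A‖ ≤ C n := by
        simp only [hCdef]
        have h := mul_le_mul_of_nonneg_right (le_max_left ‖A‖ Λ) ha.le
        linarith
      linarith
    rcases le_or_gt l Λ with hcase2 | hcase2
    · -- middle range: use convexity via stmt6_mid
      have hη0 : (0:ℝ) ≤ min (1/((n:ℝ)+1)^2) (‖T‖/2) := le_of_lt (lt_min (by positivity) (by positivity))
      have hη2 : min (1/((n:ℝ)+1)^2) (‖T‖/2) ≤ (1/((n:ℝ)+1))^2 := by
        calc min (1/((n:ℝ)+1)^2) (‖T‖/2) ≤ 1/((n:ℝ)+1)^2 := min_le_left _ _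
        _ = (1/((n:ℝ)+1))^2 := by rw [div_pow, one_pow]
      have hga : ‖u‖ - min (1/((n:ℝ)+1)^2) (‖T‖/2) ≤ ‖u + (1/((n:ℝ)+1)) • v‖ := by
        have hg := hg0 n
        have hle := hTxle n
        rw [← hu] at hle
        linarith
      have hC : Λ * (1/((n:ℝ)+1)) ≤ C n := by
        simp only [hCdef]
        exact mul_le_mul_of_nonneg_right (le_max_right _ _) ha.le
      exact stmt6_mid u v ha hcase1.le hcase2 hη0 hη2 hga hC
    · -- large l
      have hAx0 : ε₀ ≤ ‖v‖ := hlow (x n) (hx1 n) hn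
      have h1 : ‖l • v‖ - ‖u‖ ≤ ‖u + l • v‖ := by
        have := norm_sub_norm_le (l • v) (-u)
        simpa [add_comm] using this
      have h2 : ‖l • v‖ = l * ‖v‖ := by rw [norm_smul, Real.norm_eq_abs, abs_of_nonneg hl]
      have h3 : Λ * ε₀ ≤ l * ‖v‖ := mul_le_mul hcase2.le hAx0 hε₀.le hl
      have h4 : Λ * ε₀ = 2 * ‖T‖ := div_mul_cancel₀ _ hε₀.ne'
      have h5 := hTxle n
      have h6 := hC0 n
      rw [← hu] at h5
      linarith
  -- find threshold N
  have hev1 : ∀ᶠ n in atTop, ‖T‖ - d < ‖T (x n)‖ :=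
    hTxt.eventually (lt_mem_nhds (by linarith))
  have hev2 : ∀ᶠ n in atTop, C' n < ‖T‖/2 :=
    hC't.eventually (gt_mem_nhds (by positivity))
  have hev3 : ∀ᶠ n in atTop, ‖T‖/2 < ‖T (x n)‖ :=
    hTxt.eventually (lt_mem_nhds (by linarith))
  obtain ⟨N, hN⟩ := eventually_atTop.mp ((hev1.and hev2).and hev3)
  have hNfact : ∀ m : ℕ, N ≤ m →
      (‖T‖ - d < ‖T (x m)‖ ∧ C' m < ‖T‖/2) ∧ ‖T‖/2 < ‖T (x m)‖ := hN
  -- define final sequences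
  refine ⟨fun n => x (n + N),
    fun n => Real.sqrt (1 - (1 - C' (n + N) / ‖T (x (n + N))‖)^2),
    fun n => hx1 _, ?_, ?_, ?_, ?_⟩
  · intro n
    obtain ⟨⟨h1, h2⟩, h3⟩ := hNfact (n + N) (Nat.le_add_left N n)
    have hTxpos : 0 < ‖T (x (n + N))‖ := lt_trans (by positivity) h3
    have ht1 : 0 < C' (n + N) / ‖T (x (n + N))‖ := div_pos (hC'0 _) hTxpos
    have ht2 : C' (n + N) / ‖T (x (n + N))‖ < 1 := by
      rw [div_lt_one hTxpos]; linarith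
    apply Real.sqrt_pos.mpr
    nlinarith
  · have hshift : Tendsto (fun n : ℕ => n + N) atTop atTop := tendsto_add_atTop_nat N
    have ht : Tendsto (fun n => C' (n + N) / ‖T (x (n + N))‖) atTop (nhds 0) := by
      have := (hC't.comp hshift).div (hTxt.comp hshift) hT0.ne'
      rw [zero_div] at this; exact this
    have h2 : Tendsto (fun n => 1 - (1 - C' (n + N) / ‖T (x (n + N))‖)^2) atTop
        (nhds (1 - (1 - 0)^2)) :=
      tendsto_const_nhds.sub (((tendsto_const_nhds (x := (1:ℝ))).sub ht).pow 2)
    have h3 := (Real.continuous_sqrt.tendsto _).comp h2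
    simpa [Function.comp_def] using h3
  · exact hTxt.comp (tendsto_add_atTop_nat N)
  · intro n l hl
    obtain ⟨⟨h1, h2⟩, h3⟩ := hNfact (n + N) (Nat.le_add_left N n)
    have hTxpos : 0 < ‖T (x (n + N))‖ := lt_trans (by positivity) h3
    set t := C' (n + N) / ‖T (x (n + N))‖ with htdef
    have ht1 : 0 < t := div_pos (hC'0 _) hTxpos
    have ht2 : t < 1 := by rw [htdef, div_lt_one hTxpos]; linarith
    have harg : 0 ≤ 1 - (1 - t)^2 := by nlinarith
    have hsq : Real.sqrt (1 - (1 - t)^2) ^ 2 = 1 - (1 - t)^2 := Real.sq_sqrt harg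
    have h4 : Real.sqrt (1 - Real.sqrt (1 - (1 - t)^2) ^ 2) = 1 - t := by
      rw [hsq]
      have : (1:ℝ) - (1 - (1 - t)^2) = (1 - t)^2 := by ring
      rw [this, Real.sqrt_sq (by linarith)]
    rw [h4]
    have h5 : (1 - t) * ‖T (x (n + N))‖ = ‖T (x (n + N))‖ - C' (n + N) := by
      rw [htdef]; field_simp
    rw [h5]
    have h6 := main (n + N) h1 l hl
    have h7 := hCC' (n + N)
    linarith

lemma stmt6_minus_side (T A : X →L[ℝ] Y) (hT : T ≠ 0)
    (horth : ∀ l : ℝ, ‖T‖ ≤ ‖T + l • A‖)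
    (hnota : ¬ (∃ x : ℕ → X, (∀ n, ‖x n‖ = 1) ∧
          Tendsto (fun n => ‖T (x n)‖) atTop (nhds ‖T‖) ∧
          Tendsto (fun n => ‖A (x n)‖) atTop (nhds 0))) :
    ∃ (y : ℕ → X) (δ : ℕ → ℝ),
      (∀ n, ‖y n‖ = 1) ∧ (∀ n, 0 < δ n) ∧
      Tendsto δ atTop (nhds 0) ∧
      Tendsto (fun n => ‖T (y n)‖) atTop (nhds ‖T‖) ∧
      (∀ n, ∀ l : ℝ, l ≤ 0 →
        Real.sqrt (1 - (δ n) ^ 2) * ‖T (y n)‖ ≤ ‖T (y n) + l • A (y n)‖) := by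
  have horth' : ∀ l : ℝ, ‖T‖ ≤ ‖T + l • (-A)‖ := by
    intro l
    have h := horth (-l)
    rw [neg_smul] at h
    rwa [smul_neg]
  have hnota' : ¬ (∃ x : ℕ → X, (∀ n, ‖x n‖ = 1) ∧
      Tendsto (fun n => ‖T (x n)‖) atTop (nhds ‖T‖) ∧
      Tendsto (fun n => ‖(-A) (x n)‖) atTop (nhds 0)) := by
    rintro ⟨x, h1, h2, h3⟩
    refine hnota ⟨x, h1, h2, ?_⟩
    simpa [ContinuousLinearMap.neg_apply] using h3
  obtain ⟨y, δ, hy1, hδ1, hδ2, hy2, hy3⟩ := stmt6_plus_side T (-A) hT horth' hnota'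
  refine ⟨y, δ, hy1, hδ1, hδ2, hy2, ?_⟩
  intro n l hl
  have h := hy3 n (-l) (by linarith)
  have he : (-l) • ((-A) (y n)) = l • A (y n) := by
    simp [ContinuousLinearMap.neg_apply, smul_neg, neg_smul]
  rwa [he] at h

end Aux

theorem stmt_6 {X Y : Type*} [NormedAddCommGroup X] [NormedSpace ℝ X]
    [NormedAddCommGroup Y] [NormedSpace ℝ Y]
    (T : X →L[ℝ] Y) (hT : T ≠ 0) (A : X →L[ℝ] Y) :
    (∀ l : ℝ, ‖T‖ ≤ ‖T + l • A‖) ↔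
      ((∃ x : ℕ → X, (∀ n, ‖x n‖ = 1) ∧
          Filter.Tendsto (fun n => ‖T (x n)‖) Filter.atTop (nhds ‖T‖) ∧
          Filter.Tendsto (fun n => ‖A (x n)‖) Filter.atTop (nhds 0)) ∨
        (∃ (x y : ℕ → X) (ε δ : ℕ → ℝ),
          (∀ n, ‖x n‖ = 1) ∧ (∀ n, ‖y n‖ = 1) ∧
          (∀ n, 0 < ε n) ∧ (∀ n, 0 < δ n) ∧
          Filter.Tendsto ε Filter.atTop (nhds 0) ∧
          Filter.Tendsto δ Filter.atTop (nhds 0) ∧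
          Filter.Tendsto (fun n => ‖T (x n)‖) Filter.atTop (nhds ‖T‖) ∧
          Filter.Tendsto (fun n => ‖T (y n)‖) Filter.atTop (nhds ‖T‖) ∧
          (∀ n, ∀ l : ℝ, 0 ≤ l →
            Real.sqrt (1 - (ε n) ^ 2) * ‖T (x n)‖ ≤ ‖T (x n) + l • A (x n)‖) ∧
          (∀ n, ∀ l : ℝ, l ≤ 0 →
            Real.sqrt (1 - (δ n) ^ 2) * ‖T (y n)‖ ≤ ‖T (y n) + l • A (y n)‖))) := by
  constructor
  · intro horth
    by_cases ha : (∃ x : ℕ → X, (∀ n, ‖x n‖ = 1) ∧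
        Filter.Tendsto (fun n => ‖T (x n)‖) Filter.atTop (nhds ‖T‖) ∧
        Filter.Tendsto (fun n => ‖A (x n)‖) Filter.atTop (nhds 0))
    · exact Or.inl ha
    · right
      obtain ⟨x, ε, hx1, hε1, hε2, hx2, hx3⟩ := stmt6_plus_side T A hT horth ha
      obtain ⟨y, δ, hy1, hδ1, hδ2, hy2, hy3⟩ := stmt6_minus_side T A hT horth ha
      exact ⟨x, y, ε, δ, hx1, hy1, hε1, hδ1, hε2, hδ2, hx2, hy2, hx3, hy3⟩
  · intro h l
    rcases h with ⟨x, hx1, hx2, hx3⟩ |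
      ⟨x, y, ε, δ, hx1, hy1, hε1, hδ1, hε2, hδ2, hx2, hy2, hx3, hy3⟩
    · have key : ∀ n, ‖T (x n)‖ - |l| * ‖A (x n)‖ ≤ ‖T + l • A‖ := by
        intro n
        have h1 : ‖(T + l • A) (x n)‖ ≤ ‖T + l • A‖ := by
          simpa [hx1 n] using (T + l • A).le_opNorm (x n)
        have h2 : ‖T (x n)‖ - ‖l • A (x n)‖ ≤ ‖T (x n) + l • A (x n)‖ := by
          have h3 := norm_sub_norm_le (T (x n)) (-(l • A (x n)))
          simpa using h3
        have h4 : ‖l • A (x n)‖ = |l| * ‖A (x n)‖ := by rw [norm_smul, Real.norm_eq_abs]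
        have h5 : ‖T (x n) + l • A (x n)‖ = ‖(T + l • A) (x n)‖ := by
          simp [ContinuousLinearMap.add_apply, ContinuousLinearMap.smul_apply]
        linarith
      have ht : Filter.Tendsto (fun n => ‖T (x n)‖ - |l| * ‖A (x n)‖) Filter.atTop
          (nhds (‖T‖ - |l| * 0)) := hx2.sub (hx3.const_mul |l|)
      rw [mul_zero, sub_zero] at ht
      exact le_of_tendsto' ht key
    · rcases le_or_gt 0 l with hl | hl
      · have key : ∀ n, Real.sqrt (1 - (ε n) ^ 2) * ‖T (x n)‖ ≤ ‖T + l • A‖ := by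
          intro n
          refine (hx3 n l hl).trans ?_
          have h1 : ‖(T + l • A) (x n)‖ ≤ ‖T + l • A‖ := by
            simpa [hx1 n] using (T + l • A).le_opNorm (x n)
          have h5 : ‖T (x n) + l • A (x n)‖ = ‖(T + l • A) (x n)‖ := by
            simp [ContinuousLinearMap.add_apply, ContinuousLinearMap.smul_apply]
          linarith
        have ht : Filter.Tendsto (fun n => Real.sqrt (1 - (ε n) ^ 2) * ‖T (x n)‖)
            Filter.atTop (nhds (Real.sqrt (1 - (0:ℝ) ^ 2) * ‖T‖)) := by
          refine Filter.Tendsto.mul ?_ hx2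
          exact (Real.continuous_sqrt.tendsto _).comp (tendsto_const_nhds.sub (hε2.pow 2))
        have he : Real.sqrt (1 - (0:ℝ) ^ 2) * ‖T‖ = ‖T‖ := by
          norm_num
        rw [he] at ht
        exact le_of_tendsto' ht key
      · have key : ∀ n, Real.sqrt (1 - (δ n) ^ 2) * ‖T (y n)‖ ≤ ‖T + l • A‖ := by
          intro n
          refine (hy3 n l hl.le).trans ?_
          have h1 : ‖(T + l • A) (y n)‖ ≤ ‖T + l • A‖ := by
            simpa [hy1 n] using (T + l • A).le_opNorm (y n)
          have h5 : ‖T (y n) + l • A (y n)‖ = ‖(T + l • A) (y n)‖ := by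
            simp [ContinuousLinearMap.add_apply, ContinuousLinearMap.smul_apply]
          linarith
        have ht : Filter.Tendsto (fun n => Real.sqrt (1 - (δ n) ^ 2) * ‖T (y n)‖)
            Filter.atTop (nhds (Real.sqrt (1 - (0:ℝ) ^ 2) * ‖T‖)) := by
          refine Filter.Tendsto.mul ?_ hy2
          exact (Real.continuous_sqrt.tendsto _).comp (tendsto_const_nhds.sub (hδ2.pow 2))
        have he : Real.sqrt (1 - (0:ℝ) ^ 2) * ‖T‖ = ‖T‖ := by
          norm_num
        rw [he] at ht
        exact le_of_tendsto' ht key
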